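/- Let p₁, p₀, q₁, q₀, τ > 0 and ω₀ > 0 with (p₁ω₀)² + (p₀ - ω₀²)² ≠ 0 and (q₁ω₀)² + q₀² ≠ 0. If g(iω₀) = 0 where g(ζ) = ζ² + p₁ζ + p₀ + (q₁ζ + q₀)e^{-τζ}, then Re[(2iω₀ + p₁ + (q₁ - τ(q₁·iω₀ + q₀))e^{-iω₀τ}) / (iω₀(q₁·iω₀ + q₀)e^{-iω₀τ})] = (2ω₀² + p₁² - 2p₀ - q₁²)/((q₁ω₀)² + q₀²). -/

import Mathlib

open Complex

theorem re_dtau_dzeta (p1 p0 q1 q0 τ ω0 : ℝ)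
    (hp1 : 0 < p1) (hp0 : 0 < p0) (hq1 : 0 < q1) (hq0 : 0 < q0) (hτ : 0 < τ)
    (hω0 : 0 < ω0)
    (hden1 : (p1 * ω0) ^ 2 + (p0 - ω0 ^ 2) ^ 2 ≠ 0)
    (hden2 : (q1 * ω0) ^ 2 + q0 ^ 2 ≠ 0)
    (hroot : (Complex.I * ω0) ^ 2 + (p1 : ℂ) * (Complex.I * ω0) + (p0 : ℂ) +
      ((q1 : ℂ) * (Complex.I * ω0) + (q0 : ℂ)) * Complex.exp (-(τ : ℂ) * (Complex.I * ω0)) = 0) :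
    ((2 * (Complex.I * ω0) + (p1 : ℂ) +
        ((q1 : ℂ) - (τ : ℂ) * ((q1 : ℂ) * (Complex.I * ω0) + (q0 : ℂ))) *
          Complex.exp (-(τ : ℂ) * (Complex.I * ω0))) /
      (Complex.I * ω0 * ((q1 : ℂ) * (Complex.I * ω0) + (q0 : ℂ)) *
        Complex.exp (-(τ : ℂ) * (Complex.I * ω0)))).re =
    (2 * ω0 ^ 2 + p1 ^ 2 - 2 * p0 - q1 ^ 2) / ((q1 * ω0) ^ 2 + q0 ^ 2) := by
  set E : ℂ := Complex.exp (-(τ : ℂ) * (Complex.I * ω0)) with hEdef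
  set B : ℂ := (q1 : ℂ) * (Complex.I * ω0) + (q0 : ℂ) with hBdef
  set w : ℂ := -((((p0 - ω0^2 : ℝ)) : ℂ) + (((p1 * ω0 : ℝ)) : ℂ) * Complex.I) with hwdef
  have hω0' : (ω0 : ℝ) ≠ 0 := ne_of_gt hω0
  have hB : B ≠ 0 := by
    intro h
    rw [hBdef] at h
    apply hden2
    have h1 : ((q1 : ℂ) * (Complex.I * ω0) + (q0 : ℂ)).re = 0 := by rw [h]; simp
    have h2 : ((q1 : ℂ) * (Complex.I * ω0) + (q0 : ℂ)).im = 0 := by rw [h]; simp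
    simp [Complex.add_re, Complex.add_im, Complex.mul_re, Complex.mul_im] at h1 h2
    nlinarith [h1, h2]
  have hw : w ≠ 0 := by
    intro h
    rw [hwdef] at h
    apply hden1
    have h1 : (-((((p0 - ω0^2 : ℝ)) : ℂ) + (((p1 * ω0 : ℝ)) : ℂ) * Complex.I)).re = 0 := by
      rw [h]; simp
    have h2 : (-((((p0 - ω0^2 : ℝ)) : ℂ) + (((p1 * ω0 : ℝ)) : ℂ) * Complex.I)).im = 0 := by
      rw [h]; simp
    simp [pow_two, Complex.mul_re, Complex.mul_im] at h1 h2
    rcases h2 with h2 | h2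
    · exact absurd h2 (ne_of_gt hp1)
    · exact absurd h2 hω0'
  have hE : E ≠ 0 := Complex.exp_ne_zero _
  have hBE : B * E = w := by
    rw [hwdef]
    push_cast
    linear_combination hroot - (ω0:ℂ)^2 * Complex.I_sq
  have hnormE : Complex.normSq E = 1 := by
    rw [hEdef, Complex.normSq_eq_norm_sq, Complex.norm_exp]
    simp
  have hM : (p1 * ω0) ^ 2 + (p0 - ω0 ^ 2) ^ 2 = (q1 * ω0) ^ 2 + q0 ^ 2 := by
    have h := congrArg Complex.normSq hBE
    rw [Complex.normSq_mul, hnormE, mul_one, hBdef, hwdef] at h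
    simp [Complex.normSq_apply, pow_two, Complex.mul_re, Complex.mul_im] at h
    nlinarith [h]
  have hEeq : E = w / B := by
    field_simp
    linear_combination hBE
  have key : ((2 * (Complex.I * ω0) + (p1 : ℂ) + ((q1 : ℂ) - (τ : ℂ) * B) * E) /
      (Complex.I * ω0 * B * E)) =
      ((2 * (Complex.I * ω0) + (p1 : ℂ)) * B + ((q1 : ℂ) - (τ : ℂ) * B) * w) /
      (Complex.I * ω0 * w * B) := by
    rw [hEeq]
    have hI : Complex.I * (ω0:ℂ) ≠ 0 :=
      mul_ne_zero Complex.I_ne_zero (Complex.ofReal_ne_zero.mpr hω0')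
    field_simp
  rw [key, Complex.div_re]
  simp [Complex.normSq_apply, Complex.mul_re, Complex.mul_im, Complex.add_re, Complex.add_im,
    hwdef, hBdef, Complex.ofReal_re, Complex.ofReal_im, ← Complex.ofReal_pow]
  have hS : 0 < (p1 * ω0) ^ 2 + (p0 - ω0 ^ 2) ^ 2 :=
    lt_of_le_of_ne (by positivity) (Ne.symm hden1)
  have hQ : 0 < (q1 * ω0) ^ 2 + q0 ^ 2 :=
    lt_of_le_of_ne (by positivity) (Ne.symm hden2)
  have hD : (ω0 * (p1 * ω0) * q0 - ω0 * (ω0 ^ 2 - p0) * (q1 * ω0)) *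
        (ω0 * (p1 * ω0) * q0 - ω0 * (ω0 ^ 2 - p0) * (q1 * ω0)) +
      (ω0 * (p1 * ω0) * (q1 * ω0) + ω0 * (ω0 ^ 2 - p0) * q0) *
        (ω0 * (p1 * ω0) * (q1 * ω0) + ω0 * (ω0 ^ 2 - p0) * q0) ≠ 0 := by
    have h : (ω0 * (p1 * ω0) * q0 - ω0 * (ω0 ^ 2 - p0) * (q1 * ω0)) *
        (ω0 * (p1 * ω0) * q0 - ω0 * (ω0 ^ 2 - p0) * (q1 * ω0)) +
      (ω0 * (p1 * ω0) * (q1 * ω0) + ω0 * (ω0 ^ 2 - p0) * q0) *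
        (ω0 * (p1 * ω0) * (q1 * ω0) + ω0 * (ω0 ^ 2 - p0) * q0) =
        ω0 ^ 2 * ((p1 * ω0) ^ 2 + (p0 - ω0 ^ 2) ^ 2) * ((q1 * ω0) ^ 2 + q0 ^ 2) := by ring
    rw [h]
    positivity
  rw [← add_div, div_eq_div_iff hD (ne_of_gt hQ)]
  linear_combination (-(ω0 ^ 2) * ((q1 * ω0) ^ 2 + q0 ^ 2) * (2 * ω0 ^ 2 + p1 ^ 2 - 2 * p0)) * hM
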